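/- For every m ≥ 1 with 2m > l/π one has 0 > B_m > −2l/(π²m), and for every m ≥ 1 with 2m ≤ l/π one has 0 > B_m > −4l/(π³m), where B_m = −4A_m coth(πA_m/2)/(π(A_m²+1)) with A_m = √(4π²m²/l² − 1) in the first case, and B_m = −4A_m cot(πA_m/2)/(π(1−A_m²)) with A_m = √(1 − 4π²m²/l²) in the second case (and B_m = −8/π² when 4π²m²/l² = 1, which satisfies the first bound). -/

import Mathlib

open Real

set_option maxHeartbeats 1000000 in
private lemma sin_ge_sub_cube' {x : ℝ} (hx : 0 ≤ x) : x - x ^ 3 / 6 ≤ Real.sin x := by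
  have key : ∀ t : ℝ, HasDerivAt (fun t => Real.sin t - t + t ^ 3 / 6)
      (Real.cos t - 1 + t ^ 2 / 2) t := by
    intro t
    have h1 := ((Real.hasDerivAt_sin t).sub (hasDerivAt_id t)).add
      ((hasDerivAt_pow 3 t).div_const 6)
    exact h1.congr_deriv (by push_cast; ring)
  have hmono : Monotone (fun t => Real.sin t - t + t ^ 3 / 6) := by
    apply monotone_of_deriv_nonneg
    · exact fun t => ((key t).differentiableAt)
    · intro t
      rw [(key t).deriv]
      nlinarith [Real.one_sub_sq_div_two_le_cos (x := t)]
  have := hmono hx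
  simp only [Real.sin_zero] at this
  nlinarith [this]

set_option maxHeartbeats 1000000 in
private lemma core_ineq' {t : ℝ} (h0 : 0 < t) (h2 : t < π / 2) :
    π ^ 2 * t ^ 2 < Real.sin t ^ 2 * (π ^ 2 + (π ^ 2 - 4) * t ^ 2) := by
  have hpi1 : 3.141592 < π := Real.pi_gt_d6
  have hpi2 : π < 3.141593 := Real.pi_lt_d6
  have hπ4 : (4:ℝ) < π ^ 2 := by nlinarith
  have hπ2 : π ^ 2 < 9.87 := by nlinarith
  rcases le_or_gt t 1.3 with ht | ht
  · have hu : t ^ 2 ≤ 1.69 := by nlinarith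
    have hu' : (0:ℝ) ≤ 1.69 - t ^ 2 := by linarith
    have hs := sin_ge_sub_cube' h0.le
    have hp : 0 < t - t ^ 3 / 6 := by nlinarith
    have hsq : (t - t ^ 3 / 6) ^ 2 ≤ Real.sin t ^ 2 := by
      nlinarith [mul_nonneg (sub_nonneg.2 hs) hp.le,
        mul_nonneg (sub_nonneg.2 hs) (hp.le.trans hs)]
    have hA : 0 < π ^ 2 + (π ^ 2 - 4) * t ^ 2 := by nlinarith [sq_nonneg t]
    have hQ : 0 < (2*π^2/3 - 4) - (11*π^2/36 - 4/3) * t^2 + (π^2-4)/36 * (t^2)^2 := by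
      nlinarith [mul_nonneg hu' (sub_pos.2 hπ4).le, sq_nonneg (t^2 - 1.69),
        mul_nonneg (sq_nonneg (t^2 - 1.69)) (sub_pos.2 hπ4).le, hu']
    have key : π ^ 2 * t ^ 2 < (t - t ^ 3 / 6) ^ 2 * (π ^ 2 + (π ^ 2 - 4) * t ^ 2) := by
      nlinarith [mul_pos (pow_pos h0 4) hQ]
    nlinarith [mul_le_mul_of_nonneg_right hsq hA.le]
  · obtain ⟨y, rfl⟩ : ∃ y, t = π / 2 - y := ⟨π / 2 - t, by ring⟩
    have hy0 : 0 < y := by linarith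
    have hy1 : y ≤ 0.2708 := by nlinarith
    have hc : 1 - y ^ 2 / 2 ≤ Real.cos y := Real.one_sub_sq_div_two_le_cos
    have hcp : (0:ℝ) < 1 - y ^ 2 / 2 := by nlinarith
    have hst : Real.sin (π / 2 - y) = Real.cos y := Real.sin_pi_div_two_sub y
    have hsq : 1 - y ^ 2 ≤ Real.sin (π / 2 - y) ^ 2 := by
      rw [hst]
      have h1 : (1 - y^2/2)^2 ≤ Real.cos y ^ 2 := pow_le_pow_left₀ hcp.le hc 2
      nlinarith [sq_nonneg (y^2)]
    have hA : 0 < π ^ 2 + (π ^ 2 - 4) * (π / 2 - y) ^ 2 := by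
      nlinarith [sq_nonneg (π / 2 - y)]
    have hb : (π/2 - y)^2 ≤ 2.47 := by
      nlinarith [mul_nonneg hy0.le (show (0:ℝ) ≤ π - y by nlinarith)]
    have hc587 : π^2 - 4 ≤ 5.87 := by nlinarith
    have hbnn : (0:ℝ) ≤ (π/2 - y)^2 := sq_nonneg _
    have hF : (π^2 - 4) * (π/2 - y)^2 + π^2 + 4 ≤ 28.37 := by
      have := mul_le_mul hc587 hb hbnn (by norm_num : (0:ℝ) ≤ 5.87)
      nlinarith
    have hFpos : 0 ≤ (π^2 - 4) * (π/2 - y)^2 + π^2 + 4 := by nlinarith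
    have hmain : y * ((π^2 - 4) * (π/2 - y)^2 + π^2 + 4) < 4 * π := by
      have := mul_le_mul hy1 hF hFpos (by norm_num : (0:ℝ) ≤ 0.2708)
      nlinarith
    have key : π ^ 2 * (π / 2 - y) ^ 2 <
        (1 - y ^ 2) * (π ^ 2 + (π ^ 2 - 4) * (π / 2 - y) ^ 2) := by
      nlinarith [mul_pos hy0 (sub_pos.2 hmain)]
    linarith [mul_le_mul_of_nonneg_right hsq hA.le]

set_option maxHeartbeats 1000000 in
/-- Bounds for the coefficients `B_m`: for `2m > l/π` (case `A_m² = 4π²m²/l² − 1 > 0`)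
one has `0 > B_m > −2l/(π²m)`; for `2m < l/π` (case `A_m² = 1 − 4π²m²/l² > 0`)
one has `0 > B_m > −4l/(π³m)`; and when `4π²m²/l² = 1`, `B_m = −8/π²`
satisfies the first bound. -/
theorem Bm_bounds (l : ℝ) (hl : 1 ≤ l) (m : ℕ) (hm : 1 ≤ m) :
    (1 < 4 * Real.pi ^ 2 * m ^ 2 / l ^ 2 →
      ∀ A B : ℝ, A = Real.sqrt (4 * Real.pi ^ 2 * m ^ 2 / l ^ 2 - 1) →
      B = -(4 * A * (Real.cosh (Real.pi * A / 2) / Real.sinh (Real.pi * A / 2)))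
            / (Real.pi * (A ^ 2 + 1)) →
      B < 0 ∧ -(2 * l / (Real.pi ^ 2 * m)) < B) ∧
    (4 * Real.pi ^ 2 * m ^ 2 / l ^ 2 < 1 →
      ∀ A B : ℝ, A = Real.sqrt (1 - 4 * Real.pi ^ 2 * m ^ 2 / l ^ 2) →
      B = -(4 * A * (Real.cos (Real.pi * A / 2) / Real.sin (Real.pi * A / 2)))
            / (Real.pi * (1 - A ^ 2)) →
      B < 0 ∧ -(4 * l / (Real.pi ^ 3 * m)) < B) ∧
    (4 * Real.pi ^ 2 * m ^ 2 / l ^ 2 = 1 →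
      (-(8 / Real.pi ^ 2) : ℝ) < 0 ∧
      -(2 * l / (Real.pi ^ 2 * m)) < -(8 / Real.pi ^ 2)) := by
  have hpi : (0:ℝ) < π := Real.pi_pos
  have hπ4 : (4:ℝ) < π ^ 2 := by nlinarith [Real.pi_gt_d6]
  have hm1 : (1:ℝ) ≤ (m:ℝ) := by exact_mod_cast hm
  have hm0 : (0:ℝ) < (m:ℝ) := by linarith
  have hl0 : (0:ℝ) < l := by linarith
  have hl' : l ≠ 0 := ne_of_gt hl0
  refine ⟨?_, ?_, ?_⟩
  · -- case 1
    intro h1 A B hA hB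
    have harg : (0:ℝ) ≤ 4 * π ^ 2 * m ^ 2 / l ^ 2 - 1 := by linarith
    have hA2 : A ^ 2 = 4 * π ^ 2 * m ^ 2 / l ^ 2 - 1 := by
      rw [hA]; exact Real.sq_sqrt harg
    have hApos : 0 < A := by rw [hA]; exact Real.sqrt_pos.2 (by linarith)
    have ht0 : 0 < π * A / 2 := by positivity
    have hsinh : 0 < Real.sinh (π * A / 2) := Real.sinh_pos_iff.2 ht0
    have hcosh : 0 < Real.cosh (π * A / 2) := Real.cosh_pos _
    have hD : 0 < π * (A ^ 2 + 1) := by positivity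
    have hNpos : 0 < 4 * A * (Real.cosh (π * A / 2) / Real.sinh (π * A / 2)) := by positivity
    constructor
    · rw [hB]; exact div_neg_of_neg_of_pos (by linarith) hD
    · -- the lower bound
      have hts : π * A / 2 < Real.sinh (π * A / 2) := Real.self_lt_sinh_iff.2 ht0
      have hs2 : (π * A / 2) ^ 2 < Real.sinh (π * A / 2) ^ 2 := by nlinarith
      have e1 : (A * (Real.cosh (π * A / 2) / Real.sinh (π * A / 2))) ^ 2
          = A ^ 2 + A ^ 2 / Real.sinh (π * A / 2) ^ 2 := by
        rw [mul_pow, div_pow, Real.cosh_sq]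
        field_simp
      have e2 : A ^ 2 / Real.sinh (π * A / 2) ^ 2 < A ^ 2 / (π * A / 2) ^ 2 :=
        div_lt_div_of_pos_left (by positivity) (by positivity) hs2
      have e3 : A ^ 2 / (π * A / 2) ^ 2 = 4 / π ^ 2 := by
        field_simp
        ring
      have hπlt : 4 / π ^ 2 < 1 := by
        rw [div_lt_one (by positivity)]; exact hπ4
      have hsq : (A * (Real.cosh (π * A / 2) / Real.sinh (π * A / 2))) ^ 2
          < (2 * π * m / l) ^ 2 := by
        have hr : (2 * π * m / l) ^ 2 = A ^ 2 + 1 := by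
          rw [hA2]; field_simp; ring
        rw [e1, hr]
        have := e2.trans_eq e3
        linarith
      have hlt : A * (Real.cosh (π * A / 2) / Real.sinh (π * A / 2)) < 2 * π * m / l :=
        lt_of_pow_lt_pow_left₀ 2 (by positivity) hsq
      rw [hB, neg_div, neg_lt_neg_iff]
      rw [div_lt_div_iff₀ hD (by positivity : (0:ℝ) < π ^ 2 * m)]
      have hr1 : 2 * l * (π * (A ^ 2 + 1)) = 8 * π ^ 3 * m ^ 2 / l := by
        rw [hA2]; field_simp; ring
      have hr2 : 2 * π * (m:ℝ) / l * (4 * π ^ 2 * m) = 8 * π ^ 3 * m ^ 2 / l := by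
        field_simp; ring
      have := mul_lt_mul_of_pos_right hlt (show (0:ℝ) < 4 * π ^ 2 * m by positivity)
      nlinarith [this]
  · -- case 2
    intro h2 A B hA hB
    have hlt1 : (0:ℝ) < 4 * π ^ 2 * m ^ 2 / l ^ 2 := by positivity
    have harg : (0:ℝ) ≤ 1 - 4 * π ^ 2 * m ^ 2 / l ^ 2 := by linarith
    have hA2 : A ^ 2 = 1 - 4 * π ^ 2 * m ^ 2 / l ^ 2 := by
      rw [hA]; exact Real.sq_sqrt harg
    have hApos : 0 < A := by rw [hA]; exact Real.sqrt_pos.2 (by linarith)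
    have hA1 : A < 1 := by
      apply lt_of_pow_lt_pow_left₀ 2 zero_le_one
      rw [one_pow, hA2]; linarith
    have ht0 : 0 < π * A / 2 := by positivity
    have ht2 : π * A / 2 < π / 2 := by nlinarith
    have hsin : 0 < Real.sin (π * A / 2) :=
      Real.sin_pos_of_pos_of_lt_pi ht0 (by linarith)
    have hcos : 0 < Real.cos (π * A / 2) :=
      Real.cos_pos_of_mem_Ioo ⟨by linarith, ht2⟩
    have h1A : 0 < 1 - A ^ 2 := by rw [hA2]; linarith
    have hD : 0 < π * (1 - A ^ 2) := by positivity
    have hNpos : 0 < 4 * A * (Real.cos (π * A / 2) / Real.sin (π * A / 2)) := by positivity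
    constructor
    · rw [hB]; exact div_neg_of_neg_of_pos (by linarith) hD
    · have hc := core_ineq' ht0 ht2
      have hcc : π ^ 2 * A ^ 2 <
          Real.sin (π * A / 2) ^ 2 * (4 + (π ^ 2 - 4) * A ^ 2) := by
        nlinarith [hc, mul_pos hpi hpi]
      have hc2 : Real.cos (π * A / 2) ^ 2 = 1 - Real.sin (π * A / 2) ^ 2 := by
        nlinarith [Real.sin_sq_add_cos_sq (π * A / 2)]
      have h16 : (4 * (m:ℝ) / l) ^ 2 = 4 * (1 - A ^ 2) / π ^ 2 := by
        rw [hA2]; field_simp; ring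
      have e1 : (A * (Real.cos (π * A / 2) / Real.sin (π * A / 2))) ^ 2
          = A ^ 2 * (1 - Real.sin (π * A / 2) ^ 2) / Real.sin (π * A / 2) ^ 2 := by
        rw [mul_pow, div_pow, hc2]; ring
      have hsq : (A * (Real.cos (π * A / 2) / Real.sin (π * A / 2))) ^ 2
          < (4 * (m:ℝ) / l) ^ 2 := by
        rw [e1, h16, div_lt_div_iff₀ (by positivity) (by positivity)]
        nlinarith [hcc]
      have hlt : A * (Real.cos (π * A / 2) / Real.sin (π * A / 2)) < 4 * m / l :=
        lt_of_pow_lt_pow_left₀ 2 (by positivity) hsq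
      rw [hB, neg_div, neg_lt_neg_iff]
      rw [div_lt_div_iff₀ hD (by positivity : (0:ℝ) < π ^ 3 * m)]
      have hr1 : 4 * l * (π * (1 - A ^ 2)) = 16 * π ^ 3 * m ^ 2 / l := by
        rw [show (1:ℝ) - A ^ 2 = 4 * π ^ 2 * m ^ 2 / l ^ 2 by linarith]
        field_simp; ring
      have hr2 : 4 * (m:ℝ) / l * (4 * π ^ 3 * m) = 16 * π ^ 3 * m ^ 2 / l := by
        field_simp; ring
      have := mul_lt_mul_of_pos_right hlt (show (0:ℝ) < 4 * π ^ 3 * m by positivity)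
      nlinarith [this]
  · -- case 3
    intro h3
    have h3' : 4 * π ^ 2 * (m:ℝ) ^ 2 = l ^ 2 := by
      field_simp at h3; linarith
    have hgt : 4 * (m:ℝ) < l := by
      nlinarith [mul_pos hm0 hm0]
    constructor
    · have : (0:ℝ) < 8 / π ^ 2 := by positivity
      linarith
    · rw [neg_lt_neg_iff, div_lt_div_iff₀ (by positivity) (by positivity)]
      nlinarith [mul_lt_mul_of_pos_right hgt (show (0:ℝ) < 2 * π ^ 2 by positivity)]
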